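/- For every n×n symmetric real matrix M with Frobenius norm 1 all of whose k×k principal submatrices are PSD (2 ≤ k < n), the Frobenius distance from M to the PSD cone is at most (n - k)/(n + k - 2). -/

import Mathlib

open Matrix BigOperators Finset

noncomputable def frob {n : ℕ} (A : Matrix (Fin n) (Fin n) ℝ) : ℝ :=
  Real.sqrt (∑ i, ∑ j, (A i j)^2)

noncomputable def distPSD {n : ℕ} (M : Matrix (Fin n) (Fin n) ℝ) : ℝ :=
  sInf {d : ℝ | ∃ N : Matrix (Fin n) (Fin n) ℝ, N.PosSemidef ∧ d = frob (M - N)}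

def kPSD {n : ℕ} (k : ℕ) (M : Matrix (Fin n) (Fin n) ℝ) : Prop :=
  ∀ J : Finset (Fin n), J.card = k →
    (M.submatrix (fun i : {i // i ∈ J} => (i : Fin n))
      (fun i : {i // i ∈ J} => (i : Fin n))).PosSemidef

def kSparse {n : ℕ} (k : ℕ) (x : Fin n → ℝ) : Prop :=
  (Finset.univ.filter (fun i => x i ≠ 0)).card ≤ k

lemma count_supset {α : Type*} [Fintype α] [DecidableEq α] (k : ℕ) (t : Finset α)
    (htk : t.card ≤ k) :
    (((univ : Finset α).powersetCard k).filter (fun J => t ⊆ J)).card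
      = (Fintype.card α - t.card).choose (k - t.card) := by
  have hccard : Fintype.card α - t.card = (univ \ t).card := by
    rw [Finset.card_sdiff_of_subset (Finset.subset_univ t), Finset.card_univ]
  rw [hccard, ← Finset.card_powersetCard (k - t.card) (univ \ t)]
  apply Finset.card_bij' (fun J _ => J \ t) (fun u _ => u ∪ t)
  · intro J hJ
    simp only [mem_filter, mem_powersetCard] at hJ
    obtain ⟨⟨-, hcard⟩, hsub⟩ := hJ
    rw [mem_powersetCard]
    refine ⟨Finset.sdiff_subset_sdiff (Finset.subset_univ _) le_rfl, ?_⟩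
    rw [Finset.card_sdiff_of_subset hsub, hcard]
  · intro u hu
    rw [mem_powersetCard] at hu
    obtain ⟨hsub, hcard⟩ := hu
    have hdisj : Disjoint u t := Finset.disjoint_of_subset_left hsub Finset.sdiff_disjoint
    simp only [mem_filter, mem_powersetCard]
    refine ⟨⟨Finset.subset_univ _, ?_⟩, Finset.subset_union_right⟩
    rw [Finset.card_union_of_disjoint hdisj, hcard]
    omega
  · intro J hJ
    simp only [mem_filter] at hJ
    exact Finset.sdiff_union_of_subset hJ.2
  · intro u hu
    rw [mem_powersetCard] at hu
    exact Finset.union_sdiff_cancel_right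
      (Finset.disjoint_of_subset_left hu.1 Finset.sdiff_disjoint)


lemma qf_J {n k : ℕ} {M : Matrix (Fin n) (Fin n) ℝ} (h : kPSD k M)
    (J : Finset (Fin n)) (hJ : J.card = k) (x : Fin n → ℝ) :
    0 ≤ ∑ i ∈ J, ∑ j ∈ J, M i j * x i * x j := by
  have h2 := (h J hJ).dotProduct_mulVec_nonneg (fun i => x i)
  simp only [star_trivial, dotProduct, mulVec, submatrix_apply] at h2
  calc (0:ℝ) ≤ ∑ i : {i // i ∈ J}, x i * ∑ j : {j // j ∈ J}, M i j * x j := h2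
    _ = ∑ i ∈ J, ∑ j ∈ J, M i j * x i * x j := by
        rw [← Finset.sum_coe_sort J (fun i => ∑ j ∈ J, M i j * x i * x j)]
        refine Finset.sum_congr rfl fun i _ => ?_
        rw [← Finset.sum_coe_sort J (fun j => M i j * x (i:Fin n) * x j), Finset.mul_sum]
        exact Finset.sum_congr rfl fun j _ => by ring

lemma sum_over_subsets {n k : ℕ} (f : Fin n → Fin n → ℝ) :
    ∑ J ∈ (univ : Finset (Fin n)).powersetCard k, ∑ i ∈ J, ∑ j ∈ J, f i j
    = ∑ i, ∑ j, ((((univ.powersetCard k).filter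
        (fun J => i ∈ J ∧ j ∈ J)).card : ℝ)) * f i j := by
  have step : ∀ J : Finset (Fin n), ∑ i ∈ J, ∑ j ∈ J, f i j
      = ∑ i, ∑ j, if i ∈ J ∧ j ∈ J then f i j else 0 := by
    intro J
    have h1 : ∀ i ∈ J, ∑ j ∈ J, f i j = ∑ j, if i ∈ J ∧ j ∈ J then f i j else 0 := by
      intro i hi
      simp [hi, Finset.sum_ite_mem]
    rw [Finset.sum_congr rfl h1]
    apply Finset.sum_subset (Finset.subset_univ J)
    intro i _ hiJ
    simp [hiJ]
  rw [Finset.sum_congr rfl (fun J _ => step J), Finset.sum_comm]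
  refine Finset.sum_congr rfl fun i _ => ?_
  rw [Finset.sum_comm]
  refine Finset.sum_congr rfl fun j _ => ?_
  rw [← Finset.sum_filter, Finset.sum_const, nsmul_eq_mul]

lemma key_qf {n k : ℕ} (hk : 2 ≤ k) (hkn : k < n) {M : Matrix (Fin n) (Fin n) ℝ}
    (h : kPSD k M) (x : Fin n → ℝ) :
    0 ≤ (∑ i, ∑ j, M i j * x i * x j)
        + ((n:ℝ) - k)/((k:ℝ) - 1) * ∑ i, M i i * x i * x i := by
  set c1 : ℕ := (n-1).choose (k-1) with hc1
  set c2 : ℕ := (n-2).choose (k-2) with hc2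
  have hc2pos : 0 < c2 := Nat.choose_pos (by omega)
  have hnat : (n-1) * c2 = c1 * (k-1) := by
    have := Nat.add_one_mul_choose_eq (n-2) (k-2)
    have h1 : n-2+1 = n-1 := by omega
    have h2 : k-2+1 = k-1 := by omega
    rw [h1, h2] at this
    simpa [hc1, hc2] using this
  have hreal : ((n:ℝ) - 1) * (c2:ℝ) = (c1:ℝ) * ((k:ℝ) - 1) := by
    have := congrArg (Nat.cast : ℕ → ℝ) hnat
    push_cast [Nat.cast_sub (by omega : 1 ≤ n), Nat.cast_sub (by omega : 1 ≤ k)] at this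
    linarith [this]
  have hS : 0 ≤ ∑ J ∈ (univ : Finset (Fin n)).powersetCard k,
      ∑ i ∈ J, ∑ j ∈ J, M i j * x i * x j := by
    apply Finset.sum_nonneg
    intro J hJ
    rw [Finset.mem_powersetCard_univ] at hJ
    exact qf_J h J hJ x
  rw [sum_over_subsets] at hS
  have hcount : ∀ i j : Fin n, (((univ.powersetCard k).filter
      (fun J => i ∈ J ∧ j ∈ J)).card : ℝ)
      = if i = j then (c1:ℝ) else (c2:ℝ) := by
    intro i j
    by_cases hij : i = j
    · subst hij
      simp only [if_pos rfl]
      have : ((univ.powersetCard k).filter (fun J => i ∈ J ∧ i ∈ J))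
          = ((univ.powersetCard k).filter (fun J => ({i} : Finset (Fin n)) ⊆ J)) := by
        apply Finset.filter_congr
        intro J _
        simp
      rw [this, count_supset k {i} (by simpa using by omega : ({i}:Finset (Fin n)).card ≤ k)]
      simp [Fintype.card_fin, hc1]
    · simp only [if_neg hij]
      have : ((univ.powersetCard k).filter (fun J => i ∈ J ∧ j ∈ J))
          = ((univ.powersetCard k).filter (fun J => ({i, j} : Finset (Fin n)) ⊆ J)) := by
        apply Finset.filter_congr
        intro J _
        simp [Finset.insert_subset_iff]
      rw [this, count_supset k {i,j}]
      · rw [Finset.card_insert_of_notMem (by simpa using hij)]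
        simp [Fintype.card_fin, hc2]
      · rw [Finset.card_insert_of_notMem (by simpa using hij)]
        simpa using hk
  have hsplit : ∑ i, ∑ j, ((((univ.powersetCard k).filter
        (fun J => i ∈ J ∧ j ∈ J)).card : ℝ)) * (M i j * x i * x j)
      = (c2:ℝ) * (∑ i, ∑ j, M i j * x i * x j)
        + ((c1:ℝ) - (c2:ℝ)) * ∑ i, M i i * x i * x i := by
    rw [Finset.mul_sum, Finset.mul_sum, ← Finset.sum_add_distrib]
    refine Finset.sum_congr rfl fun i _ => ?_
    rw [Finset.mul_sum]
    have : ((c1:ℝ) - c2) * (M i i * x i * x i)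
        = ∑ j, if i = j then ((c1:ℝ) - c2) * (M i j * x i * x j) else 0 := by
      rw [Finset.sum_ite_eq]
      simp
    rw [this, ← Finset.sum_add_distrib]
    refine Finset.sum_congr rfl fun j _ => ?_
    rw [hcount i j]
    by_cases hij : i = j
    · subst hij; simp; ring
    · simp [hij]
  rw [hsplit] at hS
  have hkr : (0:ℝ) < (k:ℝ) - 1 := by
    have : (2:ℝ) ≤ (k:ℝ) := by exact_mod_cast hk
    linarith
  have hc2r : (0:ℝ) < (c2:ℝ) := by exact_mod_cast hc2pos
  have hcc : (c2:ℝ) * (((n:ℝ) - k)/((k:ℝ) - 1)) = (c1:ℝ) - c2 := by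
    field_simp
    linear_combination hreal
  have hfin : (c2:ℝ) * ((∑ i, ∑ j, M i j * x i * x j)
      + ((n:ℝ) - k)/((k:ℝ) - 1) * ∑ i, M i i * x i * x i)
      = (c2:ℝ) * (∑ i, ∑ j, M i j * x i * x j)
        + ((c1:ℝ) - c2) * ∑ i, M i i * x i * x i := by
    rw [mul_add, ← mul_assoc, hcc]
  exact (mul_nonneg_iff_of_pos_left hc2r).mp (hfin ▸ hS)

lemma scaled_psd {n : ℕ} (M : Matrix (Fin n) (Fin n) ℝ) (hM : M.IsSymm) (θ c : ℝ) (hθ : 0 ≤ θ)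
    (hq : ∀ x : Fin n → ℝ, 0 ≤ (∑ i, ∑ j, M i j * x i * x j)
        + c * ∑ i, M i i * x i * x i) :
    (θ • (M + c • Matrix.diagonal (fun i => M i i))).PosSemidef := by
  refine Matrix.PosSemidef.of_dotProduct_mulVec_nonneg ?_ ?_
  · rw [Matrix.IsHermitian]
    ext i j
    simp only [Matrix.conjTranspose_apply, Matrix.smul_apply, Matrix.add_apply,
      Matrix.diagonal_apply, star_trivial, smul_eq_mul]
    rw [hM.apply i j]
    by_cases hij : i = j
    · subst hij; simp
    · simp [hij, Ne.symm hij]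
  · intro x
    rw [star_trivial]
    have expand : (x : Fin n → ℝ) ⬝ᵥ ((θ • (M + c • Matrix.diagonal (fun i => M i i))) *ᵥ x)
        = θ * ((∑ i, ∑ j, M i j * x i * x j) + c * ∑ i, M i i * x i * x i) := by
      simp only [dotProduct, mulVec, Matrix.add_apply, Matrix.smul_apply,
        Matrix.diagonal_apply, smul_eq_mul, Finset.mul_sum, mul_add, add_mul,
        ← Finset.sum_add_distrib]
      refine Finset.sum_congr rfl fun i _ => ?_
      rw [Finset.sum_add_distrib]
      congr 1
      · exact Finset.sum_congr rfl fun j _ => by ring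
      · rw [show θ * (c * (M i i * x i * x i))
            = ∑ j, if i = j then θ * (c * (M i i * x i * x j)) else 0 by
          rw [Finset.sum_ite_eq]; simp]
        refine Finset.sum_congr rfl fun j _ => ?_
        split_ifs with hij
        · subst hij; ring
        · ring
    rw [expand]
    exact mul_nonneg hθ (hq x)



theorem stmt4 (n k : ℕ) (hk : 2 ≤ k) (hkn : k < n)
    (M : Matrix (Fin n) (Fin n) ℝ) (hM : M.IsSymm) (hnorm : frob M = 1)
    (h : kPSD k M) :
    distPSD M ≤ ((n : ℝ) - k) / ((n : ℝ) + k - 2) := by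
  have hkr : (2:ℝ) ≤ (k:ℝ) := by exact_mod_cast hk
  have hnr : (k:ℝ) + 1 ≤ (n:ℝ) := by exact_mod_cast hkn
  set K : ℝ := (k:ℝ) - 1 with hK
  set S1 : ℝ := ∑ i, ∑ j, (M i j)^2 with hS1def
  set A : ℝ := ∑ i, (M i i)^2 with hAdef
  have hS1 : S1 = 1 := Real.sqrt_eq_one.mp hnorm
  have hA0 : 0 ≤ A := Finset.sum_nonneg fun i _ => sq_nonneg _
  have hA1 : A ≤ S1 := by
    apply Finset.sum_le_sum
    intro i _
    exact Finset.single_le_sum (fun j _ => sq_nonneg (M i j)) (Finset.mem_univ i)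
  set B : ℝ := 1 - A with hBdef
  set Den : ℝ := A * ((n:ℝ)-1)^2 + B * K^2 with hDen
  set θ : ℝ := (A * ((n:ℝ)-1) * K + B * K^2) / Den with hθdef
  set c : ℝ := ((n:ℝ) - k) / K with hcdef
  set C0 : ℝ := (1-θ-θ*c)^2 - (1-θ)^2 with hC0
  set N : Matrix (Fin n) (Fin n) ℝ := θ • (M + c • Matrix.diagonal (fun i => M i i)) with hNdef
  clear_value K S1 A B Den θ c C0 N
  have hKpos : 0 < K := by rw [hK]; linarith
  have hnk : (0:ℝ) < (n:ℝ) - k := by linarith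
  have hSpos : (0:ℝ) < (n:ℝ) + k - 2 := by linarith
  have hA1' : A ≤ 1 := by linarith
  have hB0 : 0 ≤ B := by rw [hBdef]; linarith
  have hDenpos : 0 < Den := by
    rw [hDen, hBdef, hK]
    have hd : (0:ℝ) ≤ ((n:ℝ)-1)^2 - ((k:ℝ)-1)^2 := by nlinarith
    nlinarith [mul_nonneg hA0 hd]
  have hθ0 : 0 ≤ θ := by
    rw [hθdef]
    apply div_nonneg _ (le_of_lt hDenpos)
    have t1 : 0 ≤ A*((n:ℝ)-1)*K := mul_nonneg (mul_nonneg hA0 (by linarith)) hKpos.le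
    have t2 : 0 ≤ B*K^2 := mul_nonneg hB0 (sq_nonneg K)
    linarith
  have hNpsd : N.PosSemidef := by
    rw [hNdef]
    apply scaled_psd M hM θ c hθ0
    intro x
    rw [hcdef, hK]
    exact key_qf hk hkn h x
  have h1 : 1 - θ = A * ((n:ℝ)-1) * ((n:ℝ)-k) / Den := by
    rw [hθdef]
    field_simp
    simp only [hDen, hBdef, hK]
    ring
  have h2 : 1 - θ - θ * c = -(B * K * ((n:ℝ)-k)) / Den := by
    rw [hθdef, hcdef]
    field_simp
    simp only [hDen, hBdef, hK]
    ring
  have hentry : ∀ i j, (M - N) i j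
      = (1-θ) * M i j - θ*c*(if i = j then M i i else 0) := by
    intro i j
    rw [hNdef]
    simp only [Matrix.sub_apply, Matrix.smul_apply, Matrix.add_apply,
      Matrix.diagonal_apply, smul_eq_mul]
    split_ifs <;> ring
  have hsq : ∀ i j, ((M - N) i j)^2
      = (1-θ)^2 * (M i j)^2 + (if i = j then C0 * (M i i)^2 else 0) := by
    intro i j
    rw [hentry i j, hC0]
    split_ifs with hij
    · subst hij; ring
    · ring
  have hfs : ∑ i, ∑ j, ((M - N) i j)^2 = (1-θ)^2 * S1 + C0 * A := by
    rw [Finset.sum_congr rfl fun i _ => Finset.sum_congr rfl fun j _ => hsq i j]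
    have hrow : ∀ i : Fin n, ∑ j, ((1-θ)^2 * (M i j)^2 + (if i = j then C0 * (M i i)^2 else 0))
        = (1-θ)^2 * (∑ j, (M i j)^2) + C0 * (M i i)^2 := by
      intro i
      rw [Finset.sum_add_distrib, ← Finset.mul_sum, Finset.sum_ite_eq]
      simp
    rw [Finset.sum_congr rfl fun i _ => hrow i, Finset.sum_add_distrib,
      ← Finset.mul_sum, ← Finset.mul_sum, hS1def, hAdef]
  have hkey : A * B * ((n:ℝ)+k-2)^2 ≤ Den := by
    have hid : Den - A * B * ((n:ℝ)+k-2)^2 = (((n:ℝ)+k-2) * A - K)^2 := by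
      rw [hDen, hBdef, hK]
      ring
    linarith [hid, sq_nonneg (((n:ℝ)+k-2) * A - K)]
  have hval : (1-θ)^2 * S1 + C0 * A = ((n:ℝ)-k)^2 * (A*B) / Den := by
    rw [hC0, h2, h1, hS1]
    field_simp
    simp only [hDen, hBdef, hK]
    ring
  have hbound : ∑ i, ∑ j, ((M - N) i j)^2 ≤ (((n:ℝ) - k) / ((n:ℝ) + k - 2))^2 := by
    rw [hfs, hval, div_pow, div_le_div_iff₀ hDenpos (by positivity)]
    linarith [mul_le_mul_of_nonneg_left hkey (sq_nonneg ((n:ℝ)-k))]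
  have hfrob : frob (M - N) ≤ ((n : ℝ) - k) / ((n : ℝ) + k - 2) := by
    have hT : 0 ≤ ((n:ℝ) - k) / ((n:ℝ) + k - 2) := by positivity
    calc frob (M - N) = Real.sqrt (∑ i, ∑ j, ((M - N) i j)^2) := rfl
      _ ≤ Real.sqrt ((((n:ℝ) - k) / ((n:ℝ) + k - 2))^2) := Real.sqrt_le_sqrt hbound
      _ = ((n:ℝ) - k) / ((n:ℝ) + k - 2) := Real.sqrt_sq hT
  have hbdd : BddBelow {d : ℝ | ∃ N' : Matrix (Fin n) (Fin n) ℝ, N'.PosSemidef ∧ d = frob (M - N')} := by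
    refine ⟨0, fun d hd => ?_⟩
    obtain ⟨N', -, rfl⟩ := hd
    exact Real.sqrt_nonneg _
  have hmem : frob (M - N) ∈ {d : ℝ | ∃ N' : Matrix (Fin n) (Fin n) ℝ, N'.PosSemidef ∧ d = frob (M - N')} :=
    ⟨N, hNpsd, rfl⟩
  exact le_trans (csInf_le hbdd hmem) hfrob
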